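/- For every n ≥ 1, m(S_{n+1}) ≤ 2·m(Kₙ), where Kₙ is the complete graph on n vertices and S_{n+1} = K_{1,n} is the star on n+1 vertices. -/

import Mathlib

/-- `c` is a subgraph sum-distinct (SSD) assignment of `G`: all values are positive and
distinct nonempty vertex subsets inducing connected subgraphs have distinct sums. -/
def IsSSD {V : Type*} [Fintype V] (G : SimpleGraph V) (c : V → ℕ) : Prop :=
  (∀ v, 0 < c v) ∧ ∀ s t : Finset V, s.Nonempty → t.Nonempty →
    (G.induce (↑s : Set V)).Connected → (G.induce (↑t : Set V)).Connected →
    s ≠ t → ∑ v ∈ s, c v ≠ ∑ v ∈ t, c v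

/-- `m(G)`: the minimum over all SSD assignments `c` of `G` of the maximum weight. -/
noncomputable def mval {V : Type*} [Fintype V] (G : SimpleGraph V) : ℕ :=
  sInf {N | ∃ c : V → ℕ, IsSSD G c ∧ Finset.univ.sup c = N}

/-- `M(G)`: the minimum total weight of an SSD assignment of `G`. -/
noncomputable def Mval {V : Type*} [Fintype V] (G : SimpleGraph V) : ℕ :=
  sInf {N | ∃ c : V → ℕ, IsSSD G c ∧ ∑ v, c v = N}

/-- The star `S_{n+1} = K_{1,n}`: vertex `0` joined to the `n` other vertices. -/
def starGraph (n : ℕ) : SimpleGraph (Fin (n + 1)) where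
  Adj i j := i ≠ j ∧ (i = 0 ∨ j = 0)
  symm := by constructor; intro i j h; exact ⟨h.1.symm, h.2.symm⟩
  loopless := by constructor; intro i h; exact h.1 rfl

lemma induce_top_eq {V : Type*} (s : Set V) : (⊤ : SimpleGraph V).induce s = ⊤ := by
  ext a b; simp [Subtype.ext_iff]

lemma complete_ssd_exists (n : ℕ) :
    ∃ c : Fin n → ℕ, IsSSD (⊤ : SimpleGraph (Fin n)) c := by
  refine ⟨fun i => 2 ^ (i : ℕ), ⟨fun v => Nat.pow_pos (by norm_num), ?_⟩⟩
  intro s t _ _ _ _ hst h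
  apply hst
  have h2 : ∑ i ∈ s.image Fin.val, 2 ^ i = ∑ i ∈ t.image Fin.val, 2 ^ i := by
    rw [Finset.sum_image (fun a _ b _ => fun hh => Fin.val_injective hh),
        Finset.sum_image (fun a _ b _ => fun hh => Fin.val_injective hh)]
    exact h
  exact Finset.image_injective Fin.val_injective (Finset.geomSum_injective (le_refl 2) h2)

lemma star_conn_class (n : ℕ) (s : Finset (Fin (n+1))) (hne : s.Nonempty)
    (hc : ((starGraph n).induce (↑s : Set (Fin (n+1)))).Connected) :
    0 ∈ s ∨ ∃ i : Fin n, s = {i.succ} := by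
  have key : 0 ∈ s ∨ ∃ a, s = {a} := by
    by_contra hcon
    push_neg at hcon
    obtain ⟨h0, hsing⟩ := hcon
    obtain ⟨a, ha⟩ := hne
    obtain ⟨b, hb, hba⟩ : ∃ b ∈ s, b ≠ a := by
      by_contra hbb
      push_neg at hbb
      exact hsing a (Finset.eq_singleton_iff_unique_mem.mpr ⟨ha, hbb⟩)
    have hbot : (starGraph n).induce (↑s : Set (Fin (n+1))) = ⊥ := by
      ext x y
      simp only [SimpleGraph.comap_adj, SimpleGraph.bot_adj, iff_false]
      rintro ⟨-, h | h⟩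
      · exact h0 (h ▸ x.2)
      · exact h0 (h ▸ y.2)
    have := hc.preconnected ⟨a, ha⟩ ⟨b, hb⟩
    rw [hbot, SimpleGraph.reachable_bot] at this
    exact hba (congrArg Subtype.val this.symm)
  rcases key with h | ⟨a, rfl⟩
  · exact Or.inl h
  · rcases Fin.eq_zero_or_eq_succ a with rfl | ⟨i, rfl⟩
    · exact Or.inl (Finset.mem_singleton_self 0)
    · exact Or.inr ⟨i, rfl⟩

section main
variable {n : ℕ} (c : Fin n → ℕ)

noncomputable def cstar : Fin (n+1) → ℕ := Fin.cases 1 (fun i => 2 * c i)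

noncomputable def pre (s : Finset (Fin (n+1))) : Finset (Fin n) :=
  (s.erase 0).preimage Fin.succ (Fin.succ_injective n).injOn

lemma sum_cstar (s : Finset (Fin (n+1))) (h0 : 0 ∈ s) :
    ∑ v ∈ s, cstar c v = 1 + 2 * ∑ i ∈ pre s, c i := by
  rw [← Finset.add_sum_erase _ _ h0]
  simp only [cstar, Fin.cases_zero]
  congr 1
  have := Finset.sum_preimage Fin.succ (s.erase 0) (Fin.succ_injective n).injOn
      (fun v => (Fin.cases 1 (fun i => 2 * c i) v : ℕ))
      (fun x hx hr => absurd (Fin.exists_succ_eq.mpr (Finset.ne_of_mem_erase hx)) hr)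
  rw [pre, ← this]
  simp [Finset.mul_sum]

lemma pre_inj {s t : Finset (Fin (n+1))} (hs : 0 ∈ s) (ht : 0 ∈ t)
    (h : pre s = pre t) : s = t := by
  ext v
  rcases Fin.eq_zero_or_eq_succ v with rfl | ⟨i, rfl⟩
  · simp [hs, ht]
  · have : ∀ u : Finset (Fin (n+1)), i.succ ∈ u ↔ i ∈ pre u := by
      intro u
      simp [pre, Finset.mem_preimage, Finset.mem_erase, Fin.succ_ne_zero]
    rw [this s, this t, h]

lemma ssd_star (hc : IsSSD (⊤ : SimpleGraph (Fin n)) c) :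
    IsSSD (starGraph n) (cstar c) := by
  obtain ⟨hpos, hsum⟩ := hc
  constructor
  · intro v
    rcases Fin.eq_zero_or_eq_succ v with rfl | ⟨i, rfl⟩
    · simp [cstar]
    · simp only [cstar, Fin.cases_succ]
      exact Nat.mul_pos (by norm_num) (hpos i)
  · intro s t hsne htne hsc htc hst heq
    have hKn : ∀ u w : Finset (Fin n), u ≠ w → ∑ i ∈ u, c i ≠ ∑ i ∈ w, c i := by
      intro u w huw hh
      rcases u.eq_empty_or_nonempty with rfl | hu
      · rcases w.eq_empty_or_nonempty with rfl | hw
        · exact huw rfl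
        · have := Finset.sum_pos (fun i _ => hpos i) hw
          simp only [Finset.sum_empty] at hh
          omega
      · rcases w.eq_empty_or_nonempty with rfl | hw
        · have := Finset.sum_pos (fun i _ => hpos i) hu
          simp only [Finset.sum_empty] at hh
          omega
        · refine hsum u w hu hw ?_ ?_ huw hh
          · rw [induce_top_eq]
            haveI : Nonempty (↑u : Set (Fin n)) := ⟨⟨hu.choose, by simpa using hu.choose_spec⟩⟩
            exact SimpleGraph.connected_top
          · rw [induce_top_eq]
            haveI : Nonempty (↑w : Set (Fin n)) := ⟨⟨hw.choose, by simpa using hw.choose_spec⟩⟩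
            exact SimpleGraph.connected_top
    rcases star_conn_class n s hsne hsc with h0s | ⟨i, rfl⟩ <;>
      rcases star_conn_class n t htne htc with h0t | ⟨j, rfl⟩
    · rw [sum_cstar c s h0s, sum_cstar c t h0t] at heq
      exact hKn (pre s) (pre t) (fun hp => hst (pre_inj h0s h0t hp)) (by omega)
    · rw [sum_cstar c s h0s] at heq
      simp only [Finset.sum_singleton, cstar, Fin.cases_succ] at heq
      omega
    · rw [sum_cstar c t h0t] at heq
      simp only [Finset.sum_singleton, cstar, Fin.cases_succ] at heq
      omega
    · simp only [Finset.sum_singleton, cstar, Fin.cases_succ] at heq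
      have hij : i ≠ j := fun h => hst (by rw [h])
      exact hKn {i} {j} (fun h => hij (Finset.singleton_injective h)) (by simpa using heq)
end main


/-- `m(S_{n+1}) ≤ 2 ⬝ m(Kₙ)`. -/
theorem stmt_9 (n : ℕ) (hn : 1 ≤ n) :
    mval (starGraph n) ≤ 2 * mval (⊤ : SimpleGraph (Fin n)) := by
  obtain ⟨c0, hc0⟩ := complete_ssd_exists n
  have hne : {N | ∃ c : Fin n → ℕ, IsSSD (⊤ : SimpleGraph (Fin n)) c ∧
      Finset.univ.sup c = N}.Nonempty := ⟨_, c0, hc0, rfl⟩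
  obtain ⟨c, hc, hsup⟩ := Nat.sInf_mem hne
  have key : mval (starGraph n) ≤ Finset.univ.sup (cstar c) :=
    Nat.sInf_le ⟨cstar c, ssd_star c hc, rfl⟩
  refine key.trans ?_
  rw [mval, ← hsup]
  have hsup1 : 1 ≤ Finset.univ.sup c := by
    haveI : NeZero n := ⟨by omega⟩
    exact le_trans (hc.1 0) (Finset.le_sup (Finset.mem_univ (0 : Fin n)))
  apply Finset.sup_le
  intro v _
  rcases Fin.eq_zero_or_eq_succ v with rfl | ⟨i, rfl⟩
  · simpa [cstar] using by omega
  · simp only [cstar, Fin.cases_succ]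
    exact Nat.mul_le_mul_left 2 (Finset.le_sup (Finset.mem_univ i))
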